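/- For positive integers c and d, let lrr(c, d) denote the largest real root of the polynomial a^k − 2^c a^{k−c} − 2^d a^{k−d} (for fixed k > max(c, d), c ≠ d or with multiplicity; equivalently the largest real root of a^{max(c,d)} − 2^c a^{max(c,d)−c} − 2^d a^{max(c,d)−d} after dividing by a power of a). Then lrr(c, d) ≥ lrr(c + 1, d) and lrr(c, d) ≥ lrr(c, d + 1). -/
import Mathlib

/-- If the expression `t^k - A t^m - B t^n` is negative at `t`, then since it tends to
infinity, there is a root strictly greater than `t`. -/
lemma exists_root_gt (k m n : ℕ) (A B t : ℝ) (hA : 0 < A) (hB : 0 < B)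
    (hm : m < k) (hn : n < k) (ht : t ^ k - A * t ^ m - B * t ^ n < 0) :
    ∃ r, t < r ∧ r ^ k - A * r ^ m - B * r ^ n = 0 := by
  set g : ℝ → ℝ := fun a => a ^ k - A * a ^ m - B * a ^ n with hg
  have hcont : Continuous g := by fun_prop
  set M : ℝ := max t (max 1 (A + B + 1)) with hM
  have hM1 : (1 : ℝ) ≤ M := le_trans (le_max_left _ _) (le_max_right _ _)
  have hMt : t ≤ M := le_max_left _ _
  have hMAB : A + B < M := lt_of_lt_of_le (by linarith) (le_trans (le_max_right _ _) (le_max_right _ _))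
  have hMpos : (0 : ℝ) < M := by linarith
  have hpowm : M ^ m ≤ M ^ (k - 1) := pow_le_pow_right₀ hM1 (by omega)
  have hpown : M ^ n ≤ M ^ (k - 1) := pow_le_pow_right₀ hM1 (by omega)
  have hpowpos : (0 : ℝ) < M ^ (k - 1) := pow_pos hMpos _
  have hMk : M ^ k = M ^ (k - 1) * M := by
    rw [← pow_succ]; congr 1; omega
  have hgM : 0 < g M := by
    have h1 : A * M ^ m ≤ A * M ^ (k - 1) := by nlinarith
    have h2 : B * M ^ n ≤ B * M ^ (k - 1) := by nlinarith
    have : M ^ (k - 1) * (A + B) < M ^ (k - 1) * M := by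
      exact mul_lt_mul_of_pos_left hMAB hpowpos
    simp only [hg]
    nlinarith
  have hmem : (0 : ℝ) ∈ Set.Ioc (g t) (g M) := ⟨ht, le_of_lt hgM⟩
  have := intermediate_value_Ioc hMt hcont.continuousOn hmem
  obtain ⟨r, hr, hr0⟩ := this
  exact ⟨r, hr.1, hr0⟩

lemma aux_mono (k c d : ℕ) (hc : 1 ≤ c) (hd : 1 ≤ d)
    (hck : c + 1 < k) (hdk : d < k) (x y : ℝ)
    (hx : IsGreatest
      {a : ℝ | a ^ k - 2 ^ c * a ^ (k - c) - 2 ^ d * a ^ (k - d) = 0} x)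
    (hy : IsGreatest
      {a : ℝ | a ^ k - 2 ^ (c + 1) * a ^ (k - (c + 1)) - 2 ^ d * a ^ (k - d) = 0} y) :
    y ≤ x := by
  have hC : (0 : ℝ) < 2 ^ (c + 1) := by positivity
  have hD : (0 : ℝ) < 2 ^ d := by positivity
  -- the (c+1, d) polynomial is negative at 2
  have h2 : (2 : ℝ) ^ k - 2 ^ (c + 1) * 2 ^ (k - (c + 1)) - 2 ^ d * 2 ^ (k - d) < 0 := by
    have e1 : (2 : ℝ) ^ (c + 1) * 2 ^ (k - (c + 1)) = 2 ^ k := by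
      rw [← pow_add]; congr 1; omega
    have e2 : (2 : ℝ) ^ d * 2 ^ (k - d) = 2 ^ k := by
      rw [← pow_add]; congr 1; omega
    have : (0 : ℝ) < 2 ^ k := by positivity
    rw [e1, e2]; linarith
  obtain ⟨r, hr2, hr⟩ := exists_root_gt k (k - (c + 1)) (k - d) (2 ^ (c + 1)) (2 ^ d) 2
    hC hD (by omega) (by omega) h2
  have hy2 : 2 < y := lt_of_lt_of_le hr2 (hy.2 hr)
  -- evaluate the (c, d) polynomial at y
  have hyroot : y ^ k - 2 ^ (c + 1) * y ^ (k - (c + 1)) - 2 ^ d * y ^ (k - d) = 0 := hy.1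
  have hyneg : y ^ k - 2 ^ c * y ^ (k - c) - 2 ^ d * y ^ (k - d) < 0 := by
    have hsplit : y ^ (k - c) = y ^ (k - (c + 1)) * y := by
      rw [← pow_succ]; congr 1; omega
    have hC' : (0 : ℝ) < 2 ^ c := by positivity
    have hyp : (0 : ℝ) < y ^ (k - (c + 1)) := pow_pos (by linarith) _
    have key : y ^ k - 2 ^ c * y ^ (k - c) - 2 ^ d * y ^ (k - d)
        = 2 ^ c * y ^ (k - (c + 1)) * (2 - y) := by
      have e : (2 : ℝ) ^ (c + 1) = 2 * 2 ^ c := by ring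
      nlinarith [hyroot, hsplit]
    rw [key]
    have : (2 : ℝ) - y < 0 := by linarith
    exact mul_neg_of_pos_of_neg (by positivity) this
  obtain ⟨s, hs, hsroot⟩ := exists_root_gt k (k - c) (k - d) (2 ^ c) (2 ^ d) y
    (by positivity) hD (by omega) (by omega) hyneg
  exact le_trans (le_of_lt hs) (hx.2 hsroot)

theorem stmt_10 (k c d : ℕ) (hc : 1 ≤ c) (hd : 1 ≤ d)
    (hck : c + 1 < k) (hdk : d + 1 < k)
    (x x₁ x₂ : ℝ)
    (hx : IsGreatest
      {a : ℝ | a ^ k - 2 ^ c * a ^ (k - c) - 2 ^ d * a ^ (k - d) = 0} x)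
    (hx₁ : IsGreatest
      {a : ℝ | a ^ k - 2 ^ (c + 1) * a ^ (k - (c + 1)) - 2 ^ d * a ^ (k - d) = 0} x₁)
    (hx₂ : IsGreatest
      {a : ℝ | a ^ k - 2 ^ c * a ^ (k - c) - 2 ^ (d + 1) * a ^ (k - (d + 1)) = 0} x₂) :
    x₁ ≤ x ∧ x₂ ≤ x := by
  constructor
  · exact aux_mono k c d hc hd hck (by omega) x x₁ hx hx₁
  · -- swap roles of c and d
    have hs1 : {a : ℝ | a ^ k - 2 ^ c * a ^ (k - c) - 2 ^ d * a ^ (k - d) = 0}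
        = {a : ℝ | a ^ k - 2 ^ d * a ^ (k - d) - 2 ^ c * a ^ (k - c) = 0} := by
      ext a; simp only [Set.mem_setOf_eq]; constructor <;> intro h <;> linarith
    have hs2 : {a : ℝ | a ^ k - 2 ^ c * a ^ (k - c) - 2 ^ (d + 1) * a ^ (k - (d + 1)) = 0}
        = {a : ℝ | a ^ k - 2 ^ (d + 1) * a ^ (k - (d + 1)) - 2 ^ c * a ^ (k - c) = 0} := by
      ext a; simp only [Set.mem_setOf_eq]; constructor <;> intro h <;> linarith
    rw [hs1] at hx
    rw [hs2] at hx₂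
    exact aux_mono k d c hd hc hdk (by omega) x x₂ hx hx₂
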